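/- Fix c ∈ K. Let D̃_t be the total derivative of the equation (dtmv): 𝔽̃¹ = 2ũ²₋₁·(ũ¹₀)² − 2c·ũ¹₀ − 2(ũ¹₁·ũ²₀·ũ¹₀ + ũ¹₁ − c·ũ¹₀ − α₀·ũ¹₀)/(ũ¹₀·ũ²₀ + 1), 𝔽̃² = 2ũ²₋₁ − 2α₀·ũ²₀ − 2(ũ²₀)²·(ũ¹₁·ũ²₀·ũ¹₀ + ũ¹₁ − c·ũ¹₀ − α₀·ũ¹₀)/(ũ¹₀·ũ²₀ + 1). Set Φ¹ = (ũ¹₁·ũ²₀·ũ¹₀ + ũ¹₁ − c·ũ¹₀ − α₀·ũ¹₀)/(ũ¹₀·ũ²₀ + 1) and Φ² = ũ²₋₁. Then Φ = (Φ¹, Φ²) is a Miura-type transformation from equation (dtmv) to the Konstantinou-Rizos–Mikhailov–Xenitidis equation, i.e., the identities D̃_t(Φ¹) = 2(S(Φ²)·(Φ¹)² + α₀·Φ¹ − S(Φ¹)) and D̃_t(Φ²) = 2(S⁻¹(Φ²) − S⁻¹(Φ¹)·(Φ²)² − α₋₁·Φ²) hold in F. -/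

import Mathlib

set_option synthInstance.maxHeartbeats 1000000
set_option maxHeartbeats 4000000


open MvPolynomial

/-- Variables: `(none, ℓ)` is `α_ℓ`; `(some j, ℓ)` is `ũ^j_ℓ`. -/
abbrev VarB := Option (Fin 2) × ℤ

/-- Polynomial ring over `K` in `α_ℓ`, `ũ¹_ℓ`, `ũ²_ℓ`. -/
abbrev PolyB (K : Type) [Field K] := MvPolynomial VarB K

/-- Field of rational functions over `K` in `α_ℓ`, `ũ¹_ℓ`, `ũ²_ℓ`. -/
abbrev FB (K : Type) [Field K] := FractionRing (PolyB K)

/-- The variable `α_ℓ` (playing the role of `α(n+ℓ)`). -/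
noncomputable def al (K : Type) [Field K] (ℓ : ℤ) : FB K :=
  algebraMap (PolyB K) (FB K) (X (none, ℓ))

/-- The variable `ũ¹_ℓ`. -/
noncomputable def V1 (K : Type) [Field K] (ℓ : ℤ) : FB K :=
  algebraMap (PolyB K) (FB K) (X (some 0, ℓ))

/-- The variable `ũ²_ℓ`. -/
noncomputable def V2 (K : Type) [Field K] (ℓ : ℤ) : FB K :=
  algebraMap (PolyB K) (FB K) (X (some 1, ℓ))

/-- `𝔽̃¹` of equation (dtmv). -/
noncomputable def Feqt1 (K : Type) [Field K] (c : K) : FB K :=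
  2 * V2 K (-1) * (V1 K 0) ^ 2 - 2 * algebraMap K (FB K) c * V1 K 0 -
    2 * (V1 K 1 * V2 K 0 * V1 K 0 + V1 K 1 - algebraMap K (FB K) c * V1 K 0 -
      al K 0 * V1 K 0) / (V1 K 0 * V2 K 0 + 1)

/-- `𝔽̃²` of equation (dtmv). -/
noncomputable def Feqt2 (K : Type) [Field K] (c : K) : FB K :=
  2 * V2 K (-1) - 2 * al K 0 * V2 K 0 -
    2 * (V2 K 0) ^ 2 * (V1 K 1 * V2 K 0 * V1 K 0 + V1 K 1 - algebraMap K (FB K) c * V1 K 0 -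
      al K 0 * V1 K 0) / (V1 K 0 * V2 K 0 + 1)

/-- The first component `Φ¹` of the Miura-type transformation. -/
noncomputable def Phi1 (K : Type) [Field K] (c : K) : FB K :=
  (V1 K 1 * V2 K 0 * V1 K 0 + V1 K 1 - algebraMap K (FB K) c * V1 K 0 - al K 0 * V1 K 0) /
    (V1 K 0 * V2 K 0 + 1)

/-- The second component `Φ² = ũ²₋₁` of the Miura-type transformation. -/
noncomputable def Phi2 (K : Type) [Field K] : FB K := V2 K (-1)

/-- `F` is the field of rational functions over a char-0 field `K` in `α_ℓ, ũ¹_ℓ, ũ²_ℓ`;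
`S` is the field automorphism over `K` with `S(α_ℓ) = α_{ℓ+1}`, `S(ũ^j_ℓ) = ũ^j_{ℓ+1}`,
and `D̃_t` is the total derivative of equation (dtmv) `∂_t ũ^j = 𝔽̃^j` (the unique
derivation with `D̃_t(α_ℓ) = 0`, `D̃_t(ũ^j_ℓ) = S^ℓ(𝔽̃^j)`); both are quantified by
these characterizing properties.  Claim: `Φ = (Φ¹, Φ²)` with
`Φ¹ = (ũ¹₁ũ²₀ũ¹₀ + ũ¹₁ − cũ¹₀ − α₀ũ¹₀)/(ũ¹₀ũ²₀ + 1)`, `Φ² = ũ²₋₁` is a Miura-type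
transformation from (dtmv) to the Konstantinou-Rizos–Mikhailov–Xenitidis equation:
`D̃_t(Φ¹) = 2(S(Φ²)(Φ¹)² + α₀Φ¹ − S(Φ¹))` and
`D̃_t(Φ²) = 2(S⁻¹(Φ²) − S⁻¹(Φ¹)(Φ²)² − α₋₁Φ²)`. -/
theorem stmt_14 (K : Type) [Field K] [CharZero K] (c : K)
    (S : FB K ≃+* FB K)
    (hSK : ∀ x : K, S (algebraMap K (FB K) x) = algebraMap K (FB K) x)
    (hSal : ∀ ℓ : ℤ, S (al K ℓ) = al K (ℓ + 1))
    (hSu1 : ∀ ℓ : ℤ, S (V1 K ℓ) = V1 K (ℓ + 1))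
    (hSu2 : ∀ ℓ : ℤ, S (V2 K ℓ) = V2 K (ℓ + 1))
    (Dt : FB K → FB K)
    (hDadd : ∀ x y, Dt (x + y) = Dt x + Dt y)
    (hDmul : ∀ x y, Dt (x * y) = x * Dt y + Dt x * y)
    (hDK : ∀ x : K, Dt (algebraMap K (FB K) x) = 0)
    (hDal : ∀ ℓ : ℤ, Dt (al K ℓ) = 0)
    (hDu1 : ∀ ℓ : ℤ, Dt (V1 K ℓ) = (S ^ ℓ) (Feqt1 K c))
    (hDu2 : ∀ ℓ : ℤ, Dt (V2 K ℓ) = (S ^ ℓ) (Feqt2 K c)) :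
    Dt (Phi1 K c) =
      2 * (S (Phi2 K) * (Phi1 K c) ^ 2 + al K 0 * Phi1 K c - S (Phi1 K c)) ∧
    Dt (Phi2 K) =
      2 * (S.symm (Phi2 K) - S.symm (Phi1 K c) * (Phi2 K) ^ 2 - al K (-1) * Phi2 K) := by
  have hden : ∀ ℓ : ℤ, (V1 K ℓ * V2 K ℓ + 1 : FB K) ≠ 0 := by
    intro ℓ
    have hpoly : (X (some 0, ℓ) * X (some 1, ℓ) + 1 : PolyB K) ≠ 0 := by
      intro h
      have := congrArg constantCoeff h
      simp at this
    have key : (V1 K ℓ * V2 K ℓ + 1 : FB K)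
        = algebraMap (PolyB K) (FB K) (X (some 0, ℓ) * X (some 1, ℓ) + 1) := by
      rw [V1, V2, ← map_mul (algebraMap (PolyB K) (FB K)),
        ← map_one (algebraMap (PolyB K) (FB K)), ← map_add]
    rw [key]
    exact (map_ne_zero_iff _ (IsFractionRing.injective (PolyB K) (FB K))).mpr hpoly
  have h0 : Dt 0 = 0 := by
    have h := hDadd 0 0
    simp only [add_zero] at h
    exact (left_eq_add.mp h)
  have h1 : Dt 1 = 0 := by
    have := hDK 1; simpa using this
  have hneg : ∀ x, Dt (-x) = -Dt x := by
    intro x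
    have h := hDadd x (-x)
    rw [add_neg_cancel, h0] at h
    exact (eq_neg_of_add_eq_zero_right h.symm)
  have hDsub : ∀ x y, Dt (x - y) = Dt x - Dt y := by
    intro x y
    rw [sub_eq_add_neg, hDadd, hneg, sub_eq_add_neg]
  have hDdiv : ∀ x y : FB K, y ≠ 0 → Dt (x / y) = (Dt x * y - x * Dt y) / y ^ 2 := by
    intro x y hy
    have h := hDmul y y⁻¹
    rw [mul_inv_cancel₀ hy, h1] at h
    have hb : y * y⁻¹ = 1 := mul_inv_cancel₀ hy
    rw [div_eq_mul_inv, hDmul, eq_div_iff (pow_ne_zero 2 hy)]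
    set B := y⁻¹ with hB
    set A := Dt B with hA
    linear_combination (-(x*y))*h + (Dt x * y - x * Dt y)*hb
  have hD10 : Dt (V1 K 0) = Feqt1 K c := by simpa using hDu1 0
  have hD11 : Dt (V1 K 1) = S (Feqt1 K c) := by
    have := hDu1 1; rwa [zpow_one] at this
  have hD20 : Dt (V2 K 0) = Feqt2 K c := by simpa using hDu2 0
  have hD2m1 : Dt (V2 K (-1)) = S.symm (Feqt2 K c) := by
    have := hDu2 (-1); rwa [zpow_neg_one] at this
  have hSym1 : ∀ ℓ : ℤ, S.symm (V1 K ℓ) = V1 K (ℓ - 1) := by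
    intro ℓ
    have h := hSu1 (ℓ - 1); rw [sub_add_cancel] at h
    rw [← h, RingEquiv.symm_apply_apply]
  have hSym2 : ∀ ℓ : ℤ, S.symm (V2 K ℓ) = V2 K (ℓ - 1) := by
    intro ℓ
    have h := hSu2 (ℓ - 1); rw [sub_add_cancel] at h
    rw [← h, RingEquiv.symm_apply_apply]
  have hSymal : ∀ ℓ : ℤ, S.symm (al K ℓ) = al K (ℓ - 1) := by
    intro ℓ
    have h := hSal (ℓ - 1); rw [sub_add_cancel] at h
    rw [← h, RingEquiv.symm_apply_apply]
  have hSymK : ∀ x : K, S.symm (algebraMap K (FB K) x) = algebraMap K (FB K) x := by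
    intro x
    exact S.injective (by rw [RingEquiv.apply_symm_apply, hSK])
  constructor
  · rw [Phi1, hDdiv _ _ (hden 0)]
    simp only [hDsub, hDadd, hDmul, hDK, hDal, hD10, hD11, hD20, h1, mul_zero, zero_mul,
      add_zero, zero_add, sub_zero]
    simp only [Phi2, Phi1, Feqt1, Feqt2, map_add, map_sub, map_mul, map_div₀, map_pow,
      map_one, map_ofNat, hSK, hSal, hSu1, hSu2]
    simp only [show (-1:ℤ)+1 = 0 by norm_num, show (0:ℤ)+1 = 1 by norm_num,
      show (1:ℤ)+1 = 2 by norm_num]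
    rw [div_eq_iff (pow_ne_zero 2 (hden 0))]
    have e0 : ((V1 K 1 * V2 K 0 * V1 K 0 + V1 K 1 - algebraMap K (FB K) c * V1 K 0 -
          al K 0 * V1 K 0) / (V1 K 0 * V2 K 0 + 1)) * (V1 K 0 * V2 K 0 + 1) =
        V1 K 1 * V2 K 0 * V1 K 0 + V1 K 1 - algebraMap K (FB K) c * V1 K 0 -
          al K 0 * V1 K 0 := div_mul_cancel₀ _ (hden 0)
    linear_combination (2 * algebraMap K (FB K) c - 2 * V1 K 1 * V2 K 0 -
      2 * al K 0 * V1 K 0 * V2 K 0 - 2 * V1 K 0 * V1 K 1 * (V2 K 0) ^ 2 +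
      (-2 * V2 K 0 - 2 * V1 K 0 * (V2 K 0) ^ 2) *
        ((V1 K 1 * V2 K 0 * V1 K 0 + V1 K 1 - algebraMap K (FB K) c * V1 K 0 -
          al K 0 * V1 K 0) / (V1 K 0 * V2 K 0 + 1))) * e0
  · rw [Phi2, hD2m1]
    simp only [Phi2, Phi1, Feqt1, Feqt2, map_add, map_sub, map_mul, map_div₀, map_pow,
      map_one, map_ofNat, hSymK, hSymal, hSym1, hSym2]
    simp only [show (-1:ℤ)-1 = -2 by norm_num, show (0:ℤ)-1 = -1 by norm_num,
      show (1:ℤ)-1 = 0 by norm_num]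
    field_simp [hden (-1)]
    ring
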